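/- Let F be a finite field with q = |F| elements and let n ≥ 2. Then (1 − q⁻¹ − q⁻²)·q^(n²) < |GL_n(F)| ≤ (1 − q⁻¹)·(1 − q⁻²)·q^(n²), where the inequalities hold in the real numbers. -/
import Mathlib

open Finset in
lemma aux_lb (a : ℝ) (ha : 0 < a) (ha1 : a ≤ 1/2) :
    ∀ n, 2 ≤ n → 1 - a - a^2 + a^(n+1) ≤ ∏ k ∈ Finset.range n, (1 - a^(k+1)) := by
  intro n hn
  induction n, hn using Nat.le_induction with
  | base =>
    rw [Finset.prod_range_succ, Finset.prod_range_one]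
    ring_nf
    exact le_rfl
  | succ n hn ih =>
    rw [Finset.prod_range_succ]
    have hb : 0 < a^(n+1) := pow_pos ha _
    have hba : a^(n+1) ≤ a^2 := pow_le_pow_of_le_one ha.le (by linarith) (by omega)
    have hfac : 0 ≤ 1 - a^(n+1) := by
      have : a^(n+1) ≤ 1 := pow_le_one₀ ha.le (by linarith)
      linarith
    calc 1 - a - a^2 + a^(n+1+1) ≤ (1 - a - a^2 + a^(n+1)) * (1 - a^(n+1)) := by
          have h2 : a^(n+1+1) = a^(n+1)*a := pow_succ _ _
          rw [h2]
          nlinarith [mul_nonneg hb.le (sub_nonneg.2 hba)]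
      _ ≤ (∏ k ∈ Finset.range n, (1 - a^(k+1))) * (1 - a^(n+1)) :=
          mul_le_mul_of_nonneg_right ih hfac

open Finset in
lemma aux_ub (a : ℝ) (ha : 0 < a) (ha1 : a ≤ 1/2) :
    ∀ n, 2 ≤ n → ∏ k ∈ Finset.range n, (1 - a^(k+1)) ≤ (1 - a) * (1 - a^2) := by
  intro n hn
  induction n, hn using Nat.le_induction with
  | base =>
    rw [Finset.prod_range_succ, Finset.prod_range_one]
    norm_num
  | succ n hn ih =>
    rw [Finset.prod_range_succ]
    have hfac : 1 - a^(n+1) ≤ 1 := by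
      have : 0 < a^(n+1) := pow_pos ha _
      linarith
    have hP : 0 ≤ ∏ k ∈ Finset.range n, (1 - a^(k+1)) := by
      apply Finset.prod_nonneg
      intro k _
      have : a^(k+1) ≤ 1 := pow_le_one₀ ha.le (by linarith)
      linarith
    calc (∏ k ∈ Finset.range n, (1 - a^(k+1))) * (1 - a^(n+1))
        ≤ (∏ k ∈ Finset.range n, (1 - a^(k+1))) * 1 := mul_le_mul_of_nonneg_left hfac hP
      _ ≤ (1 - a) * (1 - a^2) := by rw [mul_one]; exact ih

theorem stmt4 (F : Type*) [Field F] [Fintype F] (q n : ℕ) (hq : Fintype.card F = q)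
    (hn : 2 ≤ n) :
    (1 - (q : ℝ)⁻¹ - ((q : ℝ) ^ 2)⁻¹) * (q : ℝ) ^ (n ^ 2) <
        (Nat.card (Matrix.GeneralLinearGroup (Fin n) F) : ℝ) ∧
      (Nat.card (Matrix.GeneralLinearGroup (Fin n) F) : ℝ) ≤
        (1 - (q : ℝ)⁻¹) * (1 - ((q : ℝ) ^ 2)⁻¹) * (q : ℝ) ^ (n ^ 2) := by
  have hq2 : 2 ≤ q := hq ▸ Fintype.one_lt_card
  set r : ℝ := (q : ℝ) with hr
  have hr2 : (2 : ℝ) ≤ r := by rw [hr]; exact_mod_cast hq2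
  have hr0 : (0 : ℝ) < r := by linarith
  have hrne : r ≠ 0 := ne_of_gt hr0
  set a : ℝ := r⁻¹ with hadef
  have ha : 0 < a := inv_pos.2 hr0
  have ha1 : a ≤ 1/2 := by
    rw [hadef]
    rw [inv_le_comm₀ hr0 (by norm_num)]
    linarith
  -- cardinality
  have hcard : (Nat.card (Matrix.GeneralLinearGroup (Fin n) F) : ℝ)
      = ∏ i ∈ Finset.range n, (r ^ n - r ^ i) := by
    rw [Matrix.card_GL_field, hq, Nat.cast_prod,
      ← Fin.prod_univ_eq_prod_range (fun i => r ^ n - r ^ i) n]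
    refine Finset.prod_congr rfl fun i _ => ?_
    rw [Nat.cast_sub (Nat.pow_le_pow_right (by omega) i.isLt.le)]
    push_cast [hr]
    ring
  have hfact : ∏ i ∈ Finset.range n, (r ^ n - r ^ i)
      = r ^ (n ^ 2) * ∏ k ∈ Finset.range n, (1 - a ^ (k + 1)) := by
    have step : ∀ i ∈ Finset.range n, r ^ n - r ^ i = r ^ n * (1 - a ^ (n - i)) := by
      intro i hi
      have hi' : i < n := Finset.mem_range.1 hi
      have hpow : r ^ i * r ^ (n - i) = r ^ n := by rw [← pow_add]; congr 1; omega
      have hinv : a ^ (n - i) = (r ^ (n - i))⁻¹ := by rw [hadef, inv_pow]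
      rw [hinv, mul_sub, mul_one, ← hpow, mul_inv_cancel_right₀ (pow_ne_zero _ hrne)]
    rw [Finset.prod_congr rfl step, Finset.prod_mul_distrib, Finset.prod_const,
      Finset.card_range, ← pow_mul, ← Nat.pow_two]
    congr 1
    have step2 : ∀ i ∈ Finset.range n, (1 : ℝ) - a ^ (n - i) = 1 - a ^ (n - 1 - i + 1) := by
      intro i hi
      have hi' : i < n := Finset.mem_range.1 hi
      congr 2
      omega
    rw [Finset.prod_congr rfl step2, Finset.prod_range_reflect (fun k => 1 - a ^ (k + 1)) n]
  have h2 : ((r : ℝ) ^ 2)⁻¹ = a ^ 2 := by rw [hadef, inv_pow]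
  have hlb := aux_lb a ha ha1 n hn
  have hub := aux_ub a ha ha1 n hn
  have hb : 0 < a ^ (n + 1) := pow_pos ha _
  constructor
  · rw [hcard, hfact, h2, mul_comm]
    exact mul_lt_mul_of_pos_left (by linarith) (pow_pos hr0 _)
  · rw [hcard, hfact, h2]
    calc r ^ (n ^ 2) * ∏ k ∈ Finset.range n, (1 - a ^ (k + 1))
        ≤ r ^ (n ^ 2) * ((1 - a) * (1 - a ^ 2)) :=
          mul_le_mul_of_nonneg_left hub (pow_nonneg hr0.le _)
      _ = (1 - a) * (1 - a ^ 2) * r ^ (n ^ 2) := by ring
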